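/- Let z_r' = d/dz E_α^{−r}(z). For any compact [α₋,α₊] ⊂ (0,1) there is a constant C such that 0 ≤ z_r' ≤ C·(1 + r·z^α·α·2^α)^{−(α+1)/α} for all α ∈ [α₋,α₊], z ∈ (0,1], r ≥ 1. In particular z_r' ≤ C·r^{−(α+1)/α}·z^{−(α+1)}. -/

import Mathlib

/-- Left branch of the LSV (Pomeau–Manneville type) map. -/
noncomputable def Ea (α x : ℝ) : ℝ := x * (1 + 2 ^ α * x ^ α)

lemma log_ge_div (t : ℝ) (ht : 0 ≤ t) : t / (1 + t) ≤ Real.log (1 + t) := by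
  have h1 : (0:ℝ) < 1 + t := by linarith
  have h2 : Real.log (1 + t)⁻¹ ≤ (1 + t)⁻¹ - 1 :=
    Real.log_le_sub_one_of_pos (by positivity)
  rw [Real.log_inv] at h2
  have : 1 - (1 + t)⁻¹ = t / (1 + t) := by field_simp; ring
  linarith [this]

lemma rpow_ge_one_add (α t : ℝ) (hα : 0 ≤ α) (ht : 0 ≤ t) :
    1 + α * (t / (1 + t)) ≤ (1 + t) ^ α := by
  have h1 : (0:ℝ) < 1 + t := by linarith
  rw [Real.rpow_def_of_pos h1]
  have h2 := log_ge_div t ht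
  have h3 : 1 + Real.log (1 + t) * α ≤ Real.exp (Real.log (1 + t) * α) := by
    linarith [Real.add_one_le_exp (Real.log (1 + t) * α)]
  have h4 : α * (t / (1 + t)) ≤ Real.log (1 + t) * α := by
    rw [mul_comm]
    exact mul_le_mul_of_nonneg_right h2 hα
  linarith

lemma factor_upper (α t : ℝ) (hα0 : 0 ≤ α) (hα1 : α ≤ 1) (ht0 : 0 ≤ t) (ht1 : t ≤ 1) :
    (1 + t) ^ (α + 1) ≤ (1 + (α + 1) * t) * Real.exp (4 * t ^ 2) := by
  have h1 : (0:ℝ) < 1 + t := by linarith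
  set s : ℝ := (α + 1) * t with hs
  have hs0 : 0 ≤ s := by positivity
  have hs2t : s ≤ 2 * t := by nlinarith
  have hA : (1 + t) ^ (α + 1) ≤ Real.exp s := by
    rw [Real.rpow_def_of_pos h1]
    apply Real.exp_le_exp.2
    have hlog : Real.log (1 + t) ≤ t := by
      have := Real.log_le_sub_one_of_pos h1; linarith
    calc Real.log (1 + t) * (α + 1) ≤ t * (α + 1) := by
          apply mul_le_mul_of_nonneg_right hlog (by linarith)
      _ = s := by ring
  have hB : Real.exp s ≤ (1 + s) * Real.exp (4 * t ^ 2) := by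
    have h1s : (0:ℝ) < 1 + s := by linarith
    have hkey : Real.exp (s / (1 + s)) ≤ 1 + s := by
      calc Real.exp (s / (1 + s)) ≤ Real.exp (Real.log (1 + s)) :=
            Real.exp_le_exp.2 (log_ge_div s hs0)
        _ = 1 + s := Real.exp_log h1s
    have hsplit : s = s / (1 + s) + s ^ 2 / (1 + s) := by field_simp
    have hsq : s ^ 2 / (1 + s) ≤ 4 * t ^ 2 := by
      have : s ^ 2 / (1 + s) ≤ s ^ 2 := by
        apply div_le_self (by positivity) (by linarith)
      nlinarith
    calc Real.exp s = Real.exp (s / (1 + s)) * Real.exp (s ^ 2 / (1 + s)) := by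
          rw [← Real.exp_add, ← hsplit]
      _ ≤ (1 + s) * Real.exp (4 * t ^ 2) := by
          apply mul_le_mul hkey (Real.exp_le_exp.2 hsq) (by positivity) (by linarith)
  calc (1 + t) ^ (α + 1) ≤ Real.exp s := hA
    _ ≤ (1 + s) * Real.exp (4 * t ^ 2) := hB
    _ = (1 + (α + 1) * t) * Real.exp (4 * t ^ 2) := by rw [hs]

lemma hasDerivAt_Ea (α x : ℝ) (hα : 0 < α) (hx : 0 < x) :
    HasDerivAt (Ea α) (1 + (α + 1) * 2 ^ α * x ^ α) x := by
  have h1 : HasDerivAt (fun y : ℝ => y ^ α) (α * x ^ (α - 1)) x :=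
    Real.hasDerivAt_rpow_const (Or.inl hx.ne')
  have h2 : HasDerivAt (fun y : ℝ => 1 + 2 ^ α * y ^ α) (2 ^ α * (α * x ^ (α - 1))) x :=
    ((h1.const_mul ((2:ℝ) ^ α)).const_add 1)
  have h3 := (hasDerivAt_id x).mul h2
  have hxx : x * x ^ (α - 1) = x ^ α := by
    rw [mul_comm, ← Real.rpow_add_one hx.ne']
    ring_nf
  convert h3 using 1
  · rfl
  · rfl
  · rfl
  have : x * (2 ^ α * (α * x ^ (α - 1))) = 2 ^ α * α * (x * x ^ (α - 1)) := by ring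
  rw [id_eq, this, hxx]
  ring

lemma key_est (α : ℝ) (hα0 : 0 < α) (hα1 : α < 1) (w : ℕ → ℝ)
    (hwpos : ∀ j, 0 < w j) (hwrec : ∀ j, Ea α (w (j + 1)) = w j)
    (hwhalf : ∀ j, w (j + 1) ≤ 1 / 2) (hw1 : w 0 ≤ 1) (r : ℕ) :
    Real.exp (-(64 / α)) * ((1 + r * (w 0) ^ α * α * 2 ^ α) ^ ((α + 1) / α) / 8 ^ ((α + 1) / α))
      ≤ ∏ j ∈ Finset.range r, (1 + (α + 1) * 2 ^ α * (w (j + 1)) ^ α) := by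
  set q : ℝ := (α + 1) / α with hq
  have h2a : (1:ℝ) ≤ 2 ^ α := Real.one_le_rpow one_le_two hα0.le
  have h2b : (2:ℝ) ^ α ≤ 2 := by
    calc (2:ℝ) ^ α ≤ 2 ^ (1:ℝ) :=
      Real.rpow_le_rpow_of_exponent_le one_le_two hα1.le
    _ = 2 := Real.rpow_one 2
  set t : ℕ → ℝ := fun j => 2 ^ α * (w j) ^ α with htdef
  set u : ℕ → ℝ := fun j => ((w j) ^ α)⁻¹ with hudef
  have hwa_pos : ∀ j, 0 < (w j) ^ α := fun j => Real.rpow_pos_of_pos (hwpos j) α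
  have hu_pos : ∀ j, 0 < u j := fun j => inv_pos.2 (hwa_pos j)
  have ht_pos : ∀ j, 0 < t j := fun j =>
    mul_pos (Real.rpow_pos_of_pos two_pos α) (hwa_pos j)
  have ht1 : ∀ j, t (j + 1) ≤ 1 := by
    intro j
    have h2w : 2 * w (j + 1) ≤ 1 := by linarith [hwhalf j]
    show 2 ^ α * (w (j + 1)) ^ α ≤ 1
    rw [← Real.mul_rpow (by norm_num) (hwpos (j + 1)).le]
    exact Real.rpow_le_one (by linarith [hwpos (j + 1)]) h2w hα0.le
  have hu0 : 1 ≤ u 0 := by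
    have hw0a : (w 0) ^ α ≤ 1 := Real.rpow_le_one (hwpos 0).le hw1 hα0.le
    exact (one_le_inv₀ (hwa_pos 0)).2 hw0a
  have hratio : ∀ j, w j = w (j + 1) * (1 + t (j + 1)) := by
    intro j
    rw [← hwrec j]; rfl
  have hu_succ : ∀ j, u (j + 1) = u j * (1 + t (j + 1)) ^ α := by
    intro j
    have h1t : (0:ℝ) < 1 + t (j + 1) := by linarith [ht_pos (j + 1)]
    have hwj : (w j) ^ α = (w (j + 1)) ^ α * (1 + t (j + 1)) ^ α := by
      rw [hratio j, Real.mul_rpow (hwpos (j + 1)).le h1t.le]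
    have h2 : ((1 + t (j + 1)) ^ α) ≠ 0 := (Real.rpow_pos_of_pos h1t α).ne'
    show ((w (j + 1)) ^ α)⁻¹ = ((w j) ^ α)⁻¹ * (1 + t (j + 1)) ^ α
    rw [hwj, mul_inv, mul_assoc, inv_mul_cancel₀ h2, mul_one]
  have hu_mono : ∀ j, u j ≤ u (j + 1) := by
    intro j
    rw [hu_succ j]
    have h1t : (1:ℝ) ≤ (1 + t (j + 1)) ^ α :=
      Real.one_le_rpow (by linarith [ht_pos (j + 1)]) hα0.le
    nlinarith [hu_pos j]
  have hstep : ∀ j, u j + α / 4 ≤ u (j + 1) := by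
    intro j
    have htp := ht_pos (j + 1)
    have ht1' := ht1 j
    have h1t : (0:ℝ) < 1 + t (j + 1) := by linarith
    have hut : 1 / 2 ≤ u j * t (j + 1) := by
      have e1 : (w j) ^ α = (w (j + 1)) ^ α * (1 + t (j + 1)) ^ α := by
        rw [hratio j, Real.mul_rpow (hwpos (j + 1)).le h1t.le]
      have e2 : (1 + t (j + 1)) ^ α ≤ 1 + t (j + 1) := by
        calc (1 + t (j + 1)) ^ α ≤ (1 + t (j + 1)) ^ (1:ℝ) :=
              Real.rpow_le_rpow_of_exponent_le (by linarith) hα1.le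
          _ = 1 + t (j + 1) := Real.rpow_one _
      have hwj2 : (w j) ^ α ≤ 2 * (w (j + 1)) ^ α := by
        calc (w j) ^ α = (w (j + 1)) ^ α * (1 + t (j + 1)) ^ α := e1
          _ ≤ (w (j + 1)) ^ α * (1 + t (j + 1)) := by nlinarith [hwa_pos (j + 1)]
          _ ≤ 2 * (w (j + 1)) ^ α := by nlinarith [hwa_pos (j + 1)]
      have e3 : u j * t (j + 1) = 2 ^ α * ((w (j + 1)) ^ α / (w j) ^ α) := by
        simp only [htdef, hudef]
        field_simp
      rw [e3]
      have hd : (1:ℝ) / 2 ≤ (w (j + 1)) ^ α / (w j) ^ α := by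
        rw [le_div_iff₀ (hwa_pos j)]
        linarith
      nlinarith [hwa_pos (j + 1), hwa_pos j]
    have hge := rpow_ge_one_add α (t (j + 1)) hα0.le htp.le
    have hdiv : t (j + 1) / 2 ≤ t (j + 1) / (1 + t (j + 1)) := by
      rw [div_le_div_iff₀ two_pos h1t]
      nlinarith
    rw [hu_succ j]
    calc u j + α / 4 ≤ u j + (α / 2) * (u j * t (j + 1)) := by nlinarith
      _ = u j * (1 + α * (t (j + 1) / 2)) := by ring
      _ ≤ u j * (1 + α * (t (j + 1) / (1 + t (j + 1)))) := by
          have h' : 1 + α * (t (j + 1) / 2) ≤ 1 + α * (t (j + 1) / (1 + t (j + 1))) := by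
            nlinarith
          exact mul_le_mul_of_nonneg_left h' (hu_pos j).le
      _ ≤ u j * (1 + t (j + 1)) ^ α := mul_le_mul_of_nonneg_left hge (hu_pos j).le
  have hu_lb : ∀ j : ℕ, u 0 + j * (α / 4) ≤ u j := by
    intro j
    induction j with
    | zero => simp
    | succ n ih =>
        have := hstep n
        push_cast
        push_cast at ih
        linarith
  have hsum : ∑ j ∈ Finset.range r, (t (j + 1)) ^ 2 ≤ 16 / α := by
    have hterm : ∀ j, (t (j + 1)) ^ 2 ≤ (16 / α) * ((u j)⁻¹ - (u (j + 1))⁻¹) := by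
      intro j
      have hup := hu_pos (j + 1)
      have hu0p := hu_pos j
      have e1 : t (j + 1) = 2 ^ α * (u (j + 1))⁻¹ := by
        simp only [htdef, hudef, inv_inv]
      have e2 : (t (j + 1)) ^ 2 ≤ 4 * ((u (j + 1))⁻¹) ^ 2 := by
        rw [e1, mul_pow]
        have h9 : (0:ℝ) ≤ ((u (j + 1))⁻¹) ^ 2 := sq_nonneg _
        have h10 : ((2:ℝ) ^ α) ^ 2 ≤ 4 := by nlinarith
        nlinarith
      have h5 : (α / 4) / (u (j + 1) * u (j + 1)) ≤ (α / 4) / (u j * u (j + 1)) := by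
        apply div_le_div_of_nonneg_left (by linarith) (mul_pos hu0p hup)
        exact mul_le_mul_of_nonneg_right (hu_mono j) hup.le
      have h6 : (α / 4) / (u j * u (j + 1)) ≤ (u j)⁻¹ - (u (j + 1))⁻¹ := by
        rw [inv_sub_inv hu0p.ne' hup.ne']
        exact (div_le_div_iff_of_pos_right (mul_pos hu0p hup)).2 (by linarith [hstep j])
      have e4 : (α / 4) * ((u (j + 1))⁻¹) ^ 2 = (α / 4) / (u (j + 1) * u (j + 1)) := by
        rw [sq]
        field_simp
      calc (t (j + 1)) ^ 2 ≤ 4 * ((u (j + 1))⁻¹) ^ 2 := e2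
        _ = (16 / α) * ((α / 4) * ((u (j + 1))⁻¹) ^ 2) := by
            field_simp
            ring
        _ ≤ (16 / α) * ((u j)⁻¹ - (u (j + 1))⁻¹) := by
            apply mul_le_mul_of_nonneg_left _ (le_of_lt (by positivity))
            rw [e4]
            exact h5.trans h6
    calc ∑ j ∈ Finset.range r, (t (j + 1)) ^ 2
        ≤ ∑ j ∈ Finset.range r, (16 / α) * ((u j)⁻¹ - (u (j + 1))⁻¹) :=
          Finset.sum_le_sum fun j _ => hterm j
      _ = (16 / α) * ((u 0)⁻¹ - (u r)⁻¹) := by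
          rw [← Finset.mul_sum, Finset.sum_range_sub' (fun j => (u j)⁻¹)]
      _ ≤ 16 / α := by
          have h8 : (u 0)⁻¹ ≤ 1 := inv_le_one_of_one_le₀ hu0
          have h9 : 0 ≤ (u r)⁻¹ := inv_nonneg.2 (hu_pos r).le
          have h10 : (0:ℝ) < 16 / α := by positivity
          nlinarith
  -- product estimates
  have hq_pos : 0 < q := by rw [hq]; positivity
  have hwr_pos : 0 < w 0 / w r := div_pos (hwpos 0) (hwpos r)
  set P : ℝ := ∏ j ∈ Finset.range r, (1 + (α + 1) * t (j + 1)) with hPdef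
  have hfac_pos : ∀ j, (0:ℝ) < 1 + (α + 1) * t (j + 1) := by
    intro j
    have := ht_pos (j + 1)
    nlinarith
  have hP_pos : 0 < P :=
    Finset.prod_pos fun j _ => hfac_pos j
  have hgoalP : ∏ j ∈ Finset.range r, (1 + (α + 1) * 2 ^ α * (w (j + 1)) ^ α) = P := by
    apply Finset.prod_congr rfl
    intro j _
    simp only [htdef]
    ring
  have hprod1 : ∀ n : ℕ, ∏ j ∈ Finset.range n, (1 + t (j + 1)) = w 0 / w n := by
    intro n
    induction n with
    | zero => simp [div_self (hwpos 0).ne']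
    | succ n ih =>
        rw [Finset.prod_range_succ, ih]
        have h1t : (0:ℝ) < 1 + t (n + 1) := by linarith [ht_pos (n + 1)]
        rw [hratio n]
        rw [div_mul_eq_mul_div]
        rw [mul_div_mul_right _ (w (n + 1)) h1t.ne']
  have hprodpow : ∏ j ∈ Finset.range r, (1 + t (j + 1)) ^ (α + 1) = (w 0 / w r) ^ (α + 1) := by
    rw [Real.finset_prod_rpow _ _ (fun j _ => by linarith [ht_pos (j + 1)]) (α + 1), hprod1 r]
  have hPexp : (w 0 / w r) ^ (α + 1) ≤ P * Real.exp (4 * ∑ j ∈ Finset.range r, (t (j + 1)) ^ 2) := by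
    rw [← hprodpow]
    calc ∏ j ∈ Finset.range r, (1 + t (j + 1)) ^ (α + 1)
        ≤ ∏ j ∈ Finset.range r, ((1 + (α + 1) * t (j + 1)) * Real.exp (4 * (t (j + 1)) ^ 2)) := by
          apply Finset.prod_le_prod
          · intro j _
            exact Real.rpow_nonneg (by linarith [ht_pos (j + 1)]) _
          · intro j _
            exact factor_upper α (t (j + 1)) hα0.le hα1.le (ht_pos (j + 1)).le (ht1 j)
      _ = P * Real.exp (4 * ∑ j ∈ Finset.range r, (t (j + 1)) ^ 2) := by
          rw [Finset.prod_mul_distrib, ← Real.exp_sum, Finset.mul_sum]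
  have hPlow : Real.exp (-(64 / α)) * (w 0 / w r) ^ (α + 1) ≤ P := by
    have hexp_le : Real.exp (4 * ∑ j ∈ Finset.range r, (t (j + 1)) ^ 2) ≤ Real.exp (64 / α) := by
      apply Real.exp_le_exp.2
      have e : (64:ℝ) / α = 4 * (16 / α) := by ring
      rw [e]
      linarith
    have h1 : (w 0 / w r) ^ (α + 1) ≤ P * Real.exp (64 / α) := by
      calc (w 0 / w r) ^ (α + 1) ≤ P * Real.exp (4 * ∑ j ∈ Finset.range r, (t (j + 1)) ^ 2) := hPexp
        _ ≤ P * Real.exp (64 / α) := mul_le_mul_of_nonneg_left hexp_le hP_pos.le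
    rw [Real.exp_neg]
    rw [inv_mul_le_iff₀ (Real.exp_pos _)] at *
    · linarith [h1]
  -- lower bound on (w 0 / w r) ^ (α+1)
  have hbase : (w 0 / w r) ^ α = u r / u 0 := by
    rw [Real.div_rpow (hwpos 0).le (hwpos r).le]
    simp only [hudef]
    rw [inv_div_inv]
  have hX : 1 + (r : ℝ) * (w 0) ^ α * α * 2 ^ α ≤ 8 * (u r / u 0) := by
    have h1 := hu_lb r
    have hu0p := hu_pos 0
    have h2 : 1 + ((r : ℝ) * (α / 4)) * (u 0)⁻¹ ≤ u r / u 0 := by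
      have e : u r / u 0 = 1 + (u r - u 0) * (u 0)⁻¹ := by field_simp; ring
      rw [e]
      have h9 : (0:ℝ) ≤ (u 0)⁻¹ := inv_nonneg.2 hu0p.le
      nlinarith
    have h3 : (u 0)⁻¹ = (w 0) ^ α := by simp only [hudef, inv_inv]
    rw [h3] at h2
    have h4 : (0:ℝ) ≤ (r : ℝ) * (w 0) ^ α * α :=
      mul_nonneg (mul_nonneg (Nat.cast_nonneg r) (hwa_pos 0).le) hα0.le
    have hw0a := hwa_pos 0
    have h5 : (r : ℝ) * (w 0) ^ α * α * 2 ^ α ≤ (r : ℝ) * (w 0) ^ α * α * 2 :=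
      mul_le_mul_of_nonneg_left h2b h4
    have h6 : 8 * (1 + ((r : ℝ) * (α / 4)) * (w 0) ^ α) ≤ 8 * (u r / u 0) := by linarith
    linarith [h5, h6]
  have hXpow : (1 + (r : ℝ) * (w 0) ^ α * α * 2 ^ α) ^ q ≤ 8 ^ q * (w 0 / w r) ^ (α + 1) := by
    have hXpos : (0:ℝ) ≤ 1 + (r : ℝ) * (w 0) ^ α * α * 2 ^ α := by
      have := hwa_pos 0
      positivity
    have h1 : (1 + (r : ℝ) * (w 0) ^ α * α * 2 ^ α) ^ q ≤ (8 * (u r / u 0)) ^ q :=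
      Real.rpow_le_rpow hXpos hX hq_pos.le
    have h2 : ((8:ℝ) * (u r / u 0)) ^ q = 8 ^ q * (u r / u 0) ^ q :=
      Real.mul_rpow (by norm_num) (div_pos (hu_pos r) (hu_pos 0)).le
    have h3 : (u r / u 0) ^ q = (w 0 / w r) ^ (α + 1) := by
      rw [← hbase, ← Real.rpow_mul hwr_pos.le]
      congr 1
      rw [hq]
      field_simp
    rw [h2, h3] at h1
    exact h1
  rw [hgoalP]
  have h8q : (0:ℝ) < 8 ^ q := Real.rpow_pos_of_pos (by norm_num) q
  calc Real.exp (-(64 / α)) * ((1 + (r : ℝ) * (w 0) ^ α * α * 2 ^ α) ^ q / 8 ^ q)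
      ≤ Real.exp (-(64 / α)) * (w 0 / w r) ^ (α + 1) := by
        apply mul_le_mul_of_nonneg_left _ (Real.exp_pos _).le
        rw [div_le_iff₀ h8q]
        calc (1 + (r : ℝ) * (w 0) ^ α * α * 2 ^ α) ^ q ≤ 8 ^ q * (w 0 / w r) ^ (α + 1) := hXpow
          _ = (w 0 / w r) ^ (α + 1) * 8 ^ q := by ring
    _ ≤ P := hPlow

noncomputable def Fa (α : ℝ) : ℝ → ℝ := fun x => min x 0 + Ea α (max x 0)

lemma Ea_zero (α : ℝ) (hα : 0 < α) : Ea α 0 = 0 := by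
  simp [Ea, Real.zero_rpow hα.ne']

lemma Fa_eq (α x : ℝ) (hα : 0 < α) (hx : 0 ≤ x) : Fa α x = Ea α x := by
  rcases eq_or_lt_of_le hx with h | h
  · simp [Fa, ← h, Ea_zero α hα]
  · simp [Fa, min_eq_right hx, max_eq_left hx]

lemma Ea_strictMonoOn (α : ℝ) (hα : 0 < α) :
    StrictMonoOn (Ea α) (Set.Ici 0) := by
  intro x hx y hy hxy
  simp only [Set.mem_Ici] at hx hy
  have h1 : x ^ α ≤ y ^ α := Real.rpow_le_rpow hx hxy.le hα.le
  have h2 : (0:ℝ) < 2 ^ α := by positivity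
  have h3 : (0:ℝ) ≤ x ^ α := Real.rpow_nonneg hx α
  unfold Ea
  have h4 : x * x ^ α ≤ y * y ^ α := mul_le_mul hxy.le h1 h3 hy
  nlinarith

lemma Fa_strictMono (α : ℝ) (hα : 0 < α) : StrictMono (Fa α) := by
  intro x y hxy
  rcases le_or_gt y 0 with hy | hy
  · have hx : x < 0 := lt_of_lt_of_le hxy hy
    simp only [Fa, min_eq_left hx.le, min_eq_left hy, max_eq_right hx.le, max_eq_right hy]
    linarith
  · have hEa : Ea α (max x 0) < Ea α (max y 0) := by
      apply Ea_strictMonoOn α hα (Set.mem_Ici.2 (le_max_right x 0))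
        (Set.mem_Ici.2 (le_max_right y 0))
      rcases le_or_gt x 0 with hx | hx
      · rw [max_eq_right hx, max_eq_left hy.le]; exact hy
      · rw [max_eq_left hx.le, max_eq_left hy.le]; exact hxy
    have hmin : min x 0 ≤ min y 0 := min_le_min hxy.le le_rfl
    simp only [Fa]
    linarith

lemma Fa_continuous (α : ℝ) (hα : 0 < α) : Continuous (Fa α) := by
  unfold Fa Ea
  have h : Continuous fun x : ℝ => x ^ α := Real.continuous_rpow_const hα.le
  fun_prop

lemma Fa_surjective (α : ℝ) (hα : 0 < α) : Function.Surjective (Fa α) := by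
  apply (Fa_continuous α hα).surjective
  · apply Filter.tendsto_atTop_mono (f := id) _ Filter.tendsto_id
    intro x
    rcases le_or_gt 0 x with hx | hx
    · rw [id, Fa_eq α x hα hx]
      have h3 : (0:ℝ) ≤ x ^ α := Real.rpow_nonneg hx α
      have h2 : (0:ℝ) < 2 ^ α := by positivity
      unfold Ea
      nlinarith [mul_nonneg (mul_nonneg h2.le hx) h3]
    · simp only [Fa, min_eq_left hx.le, max_eq_right hx.le, Ea_zero α hα, id]
      linarith
  · have hev : (id : ℝ → ℝ) =ᶠ[Filter.atBot] Fa α := by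
      filter_upwards [Filter.eventually_le_atBot (0:ℝ)] with x hx
      simp [Fa, min_eq_left hx, max_eq_right hx, Ea_zero α hα]
    exact Filter.tendsto_id.congr' hev

theorem stmt9 (αm αp : ℝ) (h1 : 0 < αm) (h2 : αm ≤ αp) (h3 : αp < 1) :
    ∃ C : ℝ, 0 < C ∧
      ∀ α ∈ Set.Icc αm αp, ∀ Z : ℕ → ℝ → ℝ,
        (∀ x ∈ Set.Ioi (0:ℝ), Z 0 x = x) →
        (∀ r : ℕ, ∀ x ∈ Set.Ioi (0:ℝ), Ea α (Z (r + 1) x) = Z r x ∧ 0 < Z (r + 1) x) →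
        (∀ r : ℕ, ∀ x ∈ Set.Ioc (0:ℝ) 1, Z (r + 1) x ≤ 1/2) →
        ∀ z ∈ Set.Ioc (0:ℝ) 1, ∀ r : ℕ, 1 ≤ r →
          0 ≤ deriv (Z r) z ∧
            deriv (Z r) z ≤ C * (1 + r * z ^ α * α * 2 ^ α) ^ (-(α + 1) / α) ∧
            deriv (Z r) z ≤ C * (r : ℝ) ^ (-(α + 1) / α) * z ^ (-(α + 1)) := by
  have hαm1 : αm < 1 := lt_of_le_of_lt h2 h3
  set qmax : ℝ := (αm + 1) / αm with hqmax
  have hqmax_pos : 0 < qmax := by rw [hqmax]; positivity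
  refine ⟨8 ^ qmax * Real.exp (64 / αm) * (αm⁻¹) ^ qmax, by positivity, ?_⟩
  intro α hα Z hZ0 hZrec hZhalf z hz r hr
  obtain ⟨hαl, hαu⟩ := hα
  have hα0 : 0 < α := lt_of_lt_of_le h1 hαl
  have hα1 : α < 1 := lt_of_le_of_lt hαu h3
  obtain ⟨hz0, hz1⟩ := hz
  -- the backward orbit
  set w : ℕ → ℝ := fun j => Z j z with hwdef
  have hw0 : w 0 = z := hZ0 z hz0
  have hwpos : ∀ j, 0 < w j := by
    intro j
    cases j with
    | zero => rw [hw0]; exact hz0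
    | succ n => exact (hZrec n z hz0).2
  have hwrec : ∀ j, Ea α (w (j + 1)) = w j := fun j => (hZrec j z hz0).1
  have hwhalf : ∀ j, w (j + 1) ≤ 1 / 2 := fun j => hZhalf j z ⟨hz0, hz1⟩
  -- the order isomorphism
  set G := StrictMono.orderIsoOfSurjective (Fa α) (Fa_strictMono α hα0) (Fa_surjective α hα0)
    with hGdef
  have hcoe : ⇑G = Fa α := StrictMono.coe_orderIsoOfSurjective _ _ _
  have hGF : ∀ x, G.symm (Fa α x) = x := fun x => by
    conv_lhs => rw [← hcoe]
    exact G.symm_apply_apply x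
  have hFG : ∀ y, Fa α (G.symm y) = y := fun y => by
    conv_lhs => rw [← hcoe]
    exact G.apply_symm_apply y
  have hGsymm_cont : Continuous ⇑G.symm := OrderIso.continuous G.symm
  -- Z agrees with iterates of G.symm on positive reals
  have hZiter : ∀ j : ℕ, ∀ y ∈ Set.Ioi (0:ℝ), Z j y = (⇑G.symm)^[j] y := by
    intro j
    induction j with
    | zero =>
        intro y hy
        simpa using hZ0 y hy
    | succ n ih =>
        intro y hy
        have h1 := hZrec n y hy
        have h2 : Fa α (Z (n + 1) y) = Z n y := by
          rw [Fa_eq α _ hα0 h1.2.le, h1.1]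
        rw [Function.iterate_succ_apply', ← ih y hy, ← h2, hGF]
  -- derivative of Fa at positive points
  have hFa_deriv : ∀ x : ℝ, 0 < x → HasDerivAt (Fa α) (1 + (α + 1) * 2 ^ α * x ^ α) x := by
    intro x hx
    apply (hasDerivAt_Ea α x hα0 hx).congr_of_eventuallyEq
    filter_upwards [Ioi_mem_nhds hx] with y hy
    exact Fa_eq α y hα0 (le_of_lt hy)
  -- derivative of iterates of Fa along the orbit
  set P : ℝ := ∏ j ∈ Finset.range r, (1 + (α + 1) * 2 ^ α * (w (j + 1)) ^ α) with hPdef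
  have hfac_pos : ∀ j : ℕ, (0:ℝ) < 1 + (α + 1) * 2 ^ α * (w (j + 1)) ^ α := by
    intro j
    have a1 : (0:ℝ) < (w (j + 1)) ^ α := Real.rpow_pos_of_pos (hwpos (j + 1)) α
    have a2 : (0:ℝ) < (2:ℝ) ^ α := Real.rpow_pos_of_pos two_pos α
    have a3 : (0:ℝ) < (α + 1) * 2 ^ α * (w (j + 1)) ^ α :=
      mul_pos (mul_pos (by linarith) a2) a1
    linarith
  have hP_pos : 0 < P := Finset.prod_pos fun j _ => hfac_pos j
  have hDF : ∀ n : ℕ, HasDerivAt ((Fa α)^[n])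
      (∏ j ∈ Finset.range n, (1 + (α + 1) * 2 ^ α * (w (j + 1)) ^ α)) (w n) := by
    intro n
    induction n with
    | zero => simpa using hasDerivAt_id (w 0)
    | succ n ih =>
        rw [Function.iterate_succ, Finset.prod_range_succ]
        have hF1 : HasDerivAt (Fa α) (1 + (α + 1) * 2 ^ α * (w (n + 1)) ^ α) (w (n + 1)) :=
          hFa_deriv _ (hwpos (n + 1))
        have hfx : Fa α (w (n + 1)) = w n := by
          rw [Fa_eq α _ hα0 (hwpos (n + 1)).le, hwrec n]
        have hg : HasDerivAt ((Fa α)^[n])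
            (∏ j ∈ Finset.range n, (1 + (α + 1) * 2 ^ α * (w (j + 1)) ^ α))
            (Fa α (w (n + 1))) := by
          rw [hfx]; exact ih
        exact hg.comp (w (n + 1)) hF1
  have hLI : Function.LeftInverse (Fa α) ⇑G.symm := hFG
  have hGr_z : (⇑G.symm)^[r] z = w r := (hZiter r z hz0).symm
  have hDG : HasDerivAt ((⇑G.symm)^[r]) P⁻¹ z := by
    apply HasDerivAt.of_local_left_inverse ((hGsymm_cont.iterate r).continuousAt)
      ?_ hP_pos.ne' (Filter.Eventually.of_forall fun y => (hLI.iterate r) y)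
    rw [hGr_z]
    exact hDF r
  have hED : deriv (Z r) z = P⁻¹ := by
    have hev : Z r =ᶠ[nhds z] (⇑G.symm)^[r] := by
      filter_upwards [Ioi_mem_nhds hz0] with y hy
      exact hZiter r y hy
    rw [hev.deriv_eq]
    exact hDG.deriv
  -- the analytic estimate
  have KE := key_est α hα0 hα1 w hwpos hwrec hwhalf (by rw [hw0]; exact hz1) r
  rw [hw0] at KE
  rw [← hPdef] at KE
  clear hDG hDF hGr_z hLI hZiter hFG hGF hcoe hGsymm_cont hFa_deriv hGdef
  clear G
  clear_value P
  clear hfac_pos hPdef hwrec hwhalf hwpos hw0 hwdef hZ0 hZrec hZhalf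
  clear_value w
  clear w
  set qα : ℝ := (α + 1) / α with hqα
  have hqα_pos : 0 < qα := by rw [hqα]; positivity
  set X : ℝ := 1 + (r : ℝ) * z ^ α * α * 2 ^ α with hXdef
  have hza : (0:ℝ) < z ^ α := Real.rpow_pos_of_pos hz0 α
  have h2a : (0:ℝ) < (2:ℝ) ^ α := Real.rpow_pos_of_pos two_pos α
  have hXpos : 0 < X := by
    have : (0:ℝ) ≤ (r : ℝ) * z ^ α * α * 2 ^ α :=
      mul_nonneg (mul_nonneg (mul_nonneg (Nat.cast_nonneg r) hza.le) hα0.le) h2a.le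
    rw [hXdef]; linarith
  have hXq_pos : (0:ℝ) < X ^ qα := Real.rpow_pos_of_pos hXpos qα
  have h8q_pos : (0:ℝ) < (8:ℝ) ^ qα := Real.rpow_pos_of_pos (by norm_num) qα
  have hB_pos : (0:ℝ) < Real.exp (-(64 / α)) * (X ^ qα / 8 ^ qα) := by positivity
  have hPinv : P⁻¹ ≤ Real.exp (64 / α) * 8 ^ qα * (X ^ qα)⁻¹ := by
    have h5 : P⁻¹ ≤ (Real.exp (-(64 / α)) * (X ^ qα / 8 ^ qα))⁻¹ :=
      inv_anti₀ hB_pos KE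
    have h6 : (Real.exp (-(64 / α)) * (X ^ qα / 8 ^ qα))⁻¹
        = Real.exp (64 / α) * 8 ^ qα * (X ^ qα)⁻¹ := by
      rw [Real.exp_neg]
      field_simp
    rw [← h6]
    exact h5
  -- comparisons of constants
  have hq_le : qα ≤ qmax := by
    rw [hqα, hqmax, div_le_div_iff₀ hα0 h1]
    nlinarith
  have h8mono : (8:ℝ) ^ qα ≤ 8 ^ qmax :=
    Real.rpow_le_rpow_of_exponent_le (by norm_num) hq_le
  have hexp_mono : Real.exp (64 / α) ≤ Real.exp (64 / αm) := by
    apply Real.exp_le_exp.2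
    exact div_le_div_of_nonneg_left (by norm_num) h1 hαl
  have hinv_am : (1:ℝ) ≤ αm⁻¹ := (one_le_inv₀ h1).2 hαm1.le
  have hinvq : (1:ℝ) ≤ (αm⁻¹) ^ qmax := Real.one_le_rpow hinv_am hqmax_pos.le
  have hCge : Real.exp (64 / α) * 8 ^ qα ≤ 8 ^ qmax * Real.exp (64 / αm) * (αm⁻¹) ^ qmax := by
    have e1 : Real.exp (64 / α) * 8 ^ qα ≤ Real.exp (64 / αm) * 8 ^ qmax := by
      apply mul_le_mul hexp_mono h8mono h8q_pos.le (Real.exp_pos _).le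
    have e2 : Real.exp (64 / αm) * 8 ^ qmax * 1 ≤ Real.exp (64 / αm) * 8 ^ qmax * ((αm⁻¹) ^ qmax) :=
      mul_le_mul_of_nonneg_left hinvq (by positivity)
    nlinarith [e1, e2]
  refine ⟨?_, ?_, ?_⟩
  · rw [hED]
    exact inv_nonneg.2 hP_pos.le
  · -- second bound
    rw [hED]
    have hexpo : -(α + 1) / α = -qα := by rw [hqα, neg_div]
    have hXneg : X ^ (-(α + 1) / α) = (X ^ qα)⁻¹ := by
      rw [hexpo, Real.rpow_neg hXpos.le]
    rw [hXneg]
    calc P⁻¹ ≤ Real.exp (64 / α) * 8 ^ qα * (X ^ qα)⁻¹ := hPinv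
      _ ≤ 8 ^ qmax * Real.exp (64 / αm) * (αm⁻¹) ^ qmax * (X ^ qα)⁻¹ := by
          exact mul_le_mul_of_nonneg_right hCge (inv_nonneg.2 hXq_pos.le)
  · -- third bound
    rw [hED]
    have hr1 : (1:ℝ) ≤ (r : ℝ) := by exact_mod_cast hr
    set Y : ℝ := (r : ℝ) * z ^ α * αm with hYdef
    have hY_pos : 0 < Y := by
      rw [hYdef]
      exact mul_pos (mul_pos (by linarith) hza) h1
    have hYX : Y ≤ X := by
      rw [hYdef, hXdef]
      have e1 : (r : ℝ) * z ^ α * αm ≤ (r : ℝ) * z ^ α * α :=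
        mul_le_mul_of_nonneg_left hαl (mul_nonneg (by linarith) hza.le)
      have e2 : (r : ℝ) * z ^ α * α * 1 ≤ (r : ℝ) * z ^ α * α * 2 ^ α := by
        apply mul_le_mul_of_nonneg_left (Real.one_le_rpow one_le_two hα0.le)
        exact mul_nonneg (mul_nonneg (by linarith) hza.le) hα0.le
      linarith
    have hYq : Y ^ qα ≤ X ^ qα := Real.rpow_le_rpow hY_pos.le hYX hqα_pos.le
    have hXYinv : (X ^ qα)⁻¹ ≤ (Y ^ qα)⁻¹ :=
      inv_anti₀ (Real.rpow_pos_of_pos hY_pos qα) hYq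
    have hYsplit : Y ^ qα = (r : ℝ) ^ qα * (z ^ α) ^ qα * αm ^ qα := by
      rw [hYdef, Real.mul_rpow (mul_nonneg (by linarith) hza.le) h1.le,
        Real.mul_rpow (by linarith) hza.le]
    have hzsplit : (z ^ α) ^ qα = z ^ (α + 1) := by
      rw [← Real.rpow_mul hz0.le]
      congr 1
      rw [hqα]
      field_simp
    have hYinv : (Y ^ qα)⁻¹ = ((r : ℝ) ^ qα)⁻¹ * (z ^ (α + 1))⁻¹ * (αm ^ qα)⁻¹ := by
      rw [hYsplit, hzsplit, mul_inv, mul_inv]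
    have hrq_pos : (0:ℝ) < (r : ℝ) ^ qα := Real.rpow_pos_of_pos (by linarith) qα
    have hzq_pos : (0:ℝ) < z ^ (α + 1) := Real.rpow_pos_of_pos hz0 (α + 1)
    have hamq_pos : (0:ℝ) < αm ^ qα := Real.rpow_pos_of_pos h1 qα
    have ham_le : (αm ^ qα)⁻¹ ≤ (αm⁻¹) ^ qmax := by
      rw [← Real.inv_rpow h1.le]
      exact Real.rpow_le_rpow_of_exponent_le hinv_am hq_le
    have hexpo : -(α + 1) / α = -qα := by rw [hqα, neg_div]
    have hgoal1 : (r : ℝ) ^ (-(α + 1) / α) = ((r : ℝ) ^ qα)⁻¹ := by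
      rw [hexpo, Real.rpow_neg (by linarith : (0:ℝ) ≤ (r:ℝ))]
    have hgoal2 : z ^ (-(α + 1)) = (z ^ (α + 1))⁻¹ := Real.rpow_neg hz0.le _
    rw [hgoal1, hgoal2]
    calc P⁻¹ ≤ Real.exp (64 / α) * 8 ^ qα * (X ^ qα)⁻¹ := hPinv
      _ ≤ Real.exp (64 / α) * 8 ^ qα * (Y ^ qα)⁻¹ := by
          apply mul_le_mul_of_nonneg_left hXYinv
          positivity
      _ = Real.exp (64 / α) * 8 ^ qα * (αm ^ qα)⁻¹ * (((r : ℝ) ^ qα)⁻¹ * (z ^ (α + 1))⁻¹) := by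
          rw [hYinv]; ring
      _ ≤ 8 ^ qmax * Real.exp (64 / αm) * (αm⁻¹) ^ qmax * (((r : ℝ) ^ qα)⁻¹ * (z ^ (α + 1))⁻¹) := by
          apply mul_le_mul_of_nonneg_right _ (by positivity)
          calc Real.exp (64 / α) * 8 ^ qα * (αm ^ qα)⁻¹
              ≤ Real.exp (64 / αm) * 8 ^ qmax * ((αm⁻¹) ^ qmax) := by
                apply mul_le_mul _ ham_le (inv_nonneg.2 hamq_pos.le) (by positivity)
                exact mul_le_mul hexp_mono h8mono h8q_pos.le (Real.exp_pos _).le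
            _ = 8 ^ qmax * Real.exp (64 / αm) * (αm⁻¹) ^ qmax := by ring
      _ = 8 ^ qmax * Real.exp (64 / αm) * (αm⁻¹) ^ qmax * ((r : ℝ) ^ qα)⁻¹ * (z ^ (α + 1))⁻¹ := by
          ring
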